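/- Let A and B be finite pseudocomplemented distributive lattices and let h : A → B be a surjective homomorphism. Then for every b ∈ B: b is an atom of B if and only if b ≠ 0 and there exists an atom a of A with h(a) = b. -/
import Mathlib


/-- Let `A` and `B` be finite pseudocomplemented distributive lattices (bounded distributive
lattices with operations `negA`, `negB` satisfying `x ≤ ¬y ↔ x ⊓ y = ⊥`) and let `h : A → B`
be a surjective homomorphism (preserving `⊓`, `⊔`, `¬`, `⊥`, `⊤`). Then `b ∈ B` is an atom
iff `b ≠ ⊥` and `b = h a` for some atom `a` of `A`. -/
theorem atom_iff_image_of_atom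
    {A B : Type*} [DistribLattice A] [BoundedOrder A] [Finite A]
    [DistribLattice B] [BoundedOrder B] [Finite B]
    (negA : A → A) (hA : ∀ x y : A, x ≤ negA y ↔ x ⊓ y = ⊥)
    (negB : B → B) (hB : ∀ x y : B, x ≤ negB y ↔ x ⊓ y = ⊥)
    (h : A → B) (hsurj : Function.Surjective h)
    (hinf : ∀ x y, h (x ⊓ y) = h x ⊓ h y) (hsup : ∀ x y, h (x ⊔ y) = h x ⊔ h y)
    (hnegh : ∀ x, h (negA x) = negB (h x)) (hbot : h ⊥ = ⊥) (htop : h ⊤ = ⊤)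
    (b : B) :
    IsAtom b ↔ b ≠ ⊥ ∧ ∃ a : A, IsAtom a ∧ h a = b := by
  constructor
  · intro hbatom
    refine ⟨hbatom.1, ?_⟩
    -- choose a minimal preimage x of b
    obtain ⟨x₀, hx₀⟩ := hsurj b
    have hwf : WellFoundedLT A := Finite.to_wellFoundedLT
    obtain ⟨x, hx, hxmin⟩ := hwf.wf.has_min {x : A | h x = b} ⟨x₀, hx₀⟩
    -- x ≠ ⊥
    have hxne : x ≠ ⊥ := by
      intro hxb
      exact hbatom.1 (by rw [← hx, hxb, hbot])
    -- get an atom a ≤ x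
    obtain ⟨a, haatom, hax⟩ := (eq_bot_or_exists_atom_le x).resolve_left hxne
    refine ⟨a, haatom, ?_⟩
    -- negB ⊥ = ⊤
    have hnegbot : negB ⊥ = ⊤ := by
      have : (⊤ : B) ≤ negB ⊥ := (hB ⊤ ⊥).mpr (by simp)
      exact le_antisymm le_top this
    by_contra hne
    have hab : h a ≤ b := by
      calc h a = h (a ⊓ x) := by rw [inf_eq_left.mpr hax]
        _ = h a ⊓ h x := hinf _ _
        _ ≤ h x := inf_le_right
        _ = b := hx
    -- since b is an atom and h a ≤ b, h a ≠ b forces h a = ⊥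
    have habot : h a = ⊥ := by
      rcases lt_or_eq_of_le hab with hlt | heq
      · exact hbatom.2 _ hlt
      · exact absurd heq hne
    -- then x ⊓ negA a is a strictly smaller preimage of b
    have hmem : h (x ⊓ negA a) = b := by
      rw [hinf, hnegh, habot, hnegbot, hx, inf_top_eq]
    have hle : x ⊓ negA a ≤ x := inf_le_left
    have heqx : x ⊓ negA a = x := by
      by_contra hne'
      exact hxmin _ hmem (lt_of_le_of_ne hle hne')
    -- so x ≤ negA a, hence a ⊓ a = ⊥, contradiction
    have hxle : x ≤ negA a := by rw [← heqx]; exact inf_le_right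
    have : x ⊓ a = ⊥ := (hA x a).mp hxle
    have : a = ⊥ := by rw [← inf_eq_right.mpr hax]; exact this
    exact haatom.1 this
  · rintro ⟨hbne, a, haatom, rfl⟩
    refine ⟨hbne, fun c hc => ?_⟩
    obtain ⟨x, rfl⟩ := hsurj c
    have hinfax : h (a ⊓ x) = h x := by
      rw [hinf, inf_eq_right.mpr hc.le]
    rcases (lt_or_eq_of_le (inf_le_left : a ⊓ x ≤ a)) with hlt | heq
    · have : a ⊓ x = ⊥ := haatom.2 _ hlt
      rw [← hinfax, this, hbot]
    · exact absurd (by rw [← hinfax, heq] : h a = h x) (ne_of_gt hc)
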